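/- arXiv:1508.01870 — 2 statements merged into one kernel-verified Lean document; each statement's English description precedes it below -/
import Mathlib

section
/- Fix ε with 0 < ε < 1/2. There is a constant C = C(ε) > 0 such that for every integer k ≥ 1 the following holds: if X, Y, Z are three independent copies of the Poisson sequence, then with probability at least 1 − ε, for every integer m with 1 ≤ m ≤ k one has ∑_{m < j ≤ k} X_j ≥ 0.99·log(k/m) − C, ∑_{m < j ≤ k} Y_j ≥ 0.99·log(k/m) − C, and ∑_{m < j ≤ k} Z_j ≥ 0.99·log(k/m) − C. -/
open MeasureTheory ProbabilityTheory Finset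

/-- The probability that a Poisson random variable of parameter `lam` equals `m`. -/
noncomputable def poissonProb (lam : ℝ) (m : ℕ) : ENNReal :=
  ENNReal.ofReal (Real.exp (-lam) * lam ^ m / (m.factorial : ℝ))

lemma iIndepFun_reindex {Ω ι ι' : Type*} [MeasurableSpace Ω] {μ : Measure Ω}
    {β : Type*} [MeasurableSpace β] {f : ι → Ω → β} (g : ι' → ι)
    (hg : Function.Injective g)
    (h : iIndepFun f μ) :
    iIndepFun (fun i => f (g i)) μ := by
  classical
  rw [iIndepFun_iff_measure_inter_preimage_eq_mul] at h ⊢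
  intro S sets hsets
  set sets' : ι → Set β := fun i =>
    if hc : ∃ i' ∈ S, g i' = i then sets hc.choose else Set.univ with hsets'def
  have key : ∀ i' ∈ S, sets' (g i') = sets i' := by
    intro i' hi'
    have hex : ∃ j ∈ S, g j = g i' := ⟨i', hi', rfl⟩
    have hspec := hex.choose_spec
    have heq : hex.choose = i' := hg hspec.2
    simp only [hsets'def, dif_pos hex, heq]
  have hmeas' : ∀ i ∈ S.image g, MeasurableSet (sets' i) := by
    intro i hi
    simp only [mem_image] at hi
    obtain ⟨i', hi', rfl⟩ := hi
    rw [key i' hi']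
    exact hsets i' hi'
  have hh := h (S.image g) hmeas'
  rw [Finset.set_biInter_finset_image, Finset.prod_image (fun x _ y _ hxy => hg hxy)] at hh
  have e1 : (⋂ i ∈ S, (fun i => f (g i)) i ⁻¹' sets i) = ⋂ i ∈ S, f (g i) ⁻¹' sets' (g i) :=
    Set.iInter₂_congr fun i hi => by rw [key i hi]
  have e2 : ∏ i ∈ S, μ ((fun i => f (g i)) i ⁻¹' sets i)
      = ∏ i ∈ S, μ (f (g i) ⁻¹' sets' (g i)) :=
    Finset.prod_congr rfl fun i hi => by rw [key i hi]
  rw [e1, e2]; exact hh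

lemma integrable_exp_mul_natcast {Ω : Type*} [MeasurableSpace Ω] (μ : Measure Ω)
    [IsProbabilityMeasure μ] (W : Ω → ℕ) (hW : Measurable W) (t : ℝ) (ht : t ≤ 0) :
    Integrable (fun ω => Real.exp (t * (W ω : ℝ))) μ := by
  have hm : Measurable (fun ω => Real.exp (t * (W ω : ℝ))) :=
    ((measurable_from_nat.comp hW : Measurable fun ω => ((W ω : ℝ))).const_mul t).exp
  refine Integrable.mono' (integrable_const 1) hm.aestronglyMeasurable
    (ae_of_all _ fun ω => ?_)
  rw [Real.norm_of_nonneg (Real.exp_pos _).le]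
  exact Real.exp_le_one_iff.2 (mul_nonpos_of_nonpos_of_nonneg ht (Nat.cast_nonneg _))

lemma mgf_poisson {Ω : Type*} [MeasurableSpace Ω] (μ : Measure Ω) [IsProbabilityMeasure μ]
    (W : Ω → ℕ) (hW : Measurable W) (lam : ℝ) (hlam : 0 ≤ lam)
    (hp : ∀ n, μ {ω | W ω = n} = poissonProb lam n) (t : ℝ) (ht : t ≤ 0) :
    mgf (fun ω => (W ω : ℝ)) μ t = Real.exp (lam * (Real.exp t - 1)) := by
  have hmap : ∀ n : ℕ, μ.map W {n} = poissonProb lam n := fun n => by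
    rw [Measure.map_apply hW (measurableSet_singleton n)]
    exact hp n
  have hprob : IsProbabilityMeasure (μ.map W) := Measure.isProbabilityMeasure_map hW.aemeasurable
  have hint : Integrable (fun n : ℕ => Real.exp (t * (n : ℝ))) (μ.map W) := by
    refine Integrable.mono' (integrable_const 1)
      (measurable_from_nat.aestronglyMeasurable) (ae_of_all _ fun n => ?_)
    rw [Real.norm_of_nonneg (Real.exp_pos _).le]
    exact Real.exp_le_one_iff.2 (mul_nonpos_of_nonpos_of_nonneg ht (Nat.cast_nonneg _))
  have step1 : mgf (fun ω => (W ω : ℝ)) μ t = ∫ n : ℕ, Real.exp (t * (n : ℝ)) ∂(μ.map W) := by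
    rw [mgf, integral_map hW.aemeasurable hint.1]
  rw [step1, integral_countable' hint]
  have term : ∀ n : ℕ, (μ.map W).real {n} • Real.exp (t * (n : ℝ))
      = Real.exp (-lam) * ((lam * Real.exp t) ^ n / (n.factorial : ℝ)) := by
    intro n
    rw [measureReal_def, hmap n, poissonProb, ENNReal.toReal_ofReal (by positivity), smul_eq_mul]
    rw [mul_pow, mul_comm t (n : ℝ), Real.exp_nat_mul]
    ring
  rw [tsum_congr term, tsum_mul_left]
  have : ∑' n : ℕ, (lam * Real.exp t) ^ n / (n.factorial : ℝ)
      = Real.exp (lam * Real.exp t) := by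
    rw [Real.exp_eq_exp_ℝ, NormedSpace.exp_eq_tsum_div]
  rw [this, ← Real.exp_add]
  ring_nf

lemma harmonic_lower (m : ℕ) : ∀ k, m ≤ k →
    Real.log ((k : ℝ) + 1) - Real.log ((m : ℝ) + 1) ≤ ∑ j ∈ Ioc m k, (1 : ℝ) / j := by
  refine Nat.le_induction ?_ ?_
  · simp
  · intro k hk IH
    rw [Finset.sum_Ioc_succ_top hk]
    have hx : (0 : ℝ) < (k : ℝ) + 1 := by positivity
    have h1 : Real.log ((k : ℝ) + 1 + 1) - Real.log ((k : ℝ) + 1) ≤ 1 / ((k : ℝ) + 1) := by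
      have := Real.log_le_sub_one_of_pos (x := ((k : ℝ) + 1 + 1) / ((k : ℝ) + 1)) (by positivity)
      rw [Real.log_div (by positivity) (ne_of_gt hx)] at this
      calc Real.log ((k : ℝ) + 1 + 1) - Real.log ((k : ℝ) + 1)
          ≤ ((k : ℝ) + 1 + 1) / ((k : ℝ) + 1) - 1 := this
        _ = 1 / ((k : ℝ) + 1) := by field_simp; ring
    push_cast
    linarith

lemma chernoff_sum {Ω : Type*} [MeasurableSpace Ω] (μ : Measure Ω) [IsProbabilityMeasure μ]
    (W : ℕ → Ω → ℕ) (hWm : ∀ j, Measurable (W j))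
    (hind : iIndepFun
      (fun j : {j : ℕ // 1 ≤ j} => fun ω => ((W j.1 ω : ℕ) : ℝ)) μ)
    (hp : ∀ j, 1 ≤ j → ∀ n, μ {ω | W j ω = n} = poissonProb (1 / (j : ℝ)) n)
    (m k : ℕ) (hm : 1 ≤ m) (t a : ℝ) (ht : t ≤ 0) :
    μ {ω | ∑ j ∈ Ioc m k, ((W j ω : ℕ) : ℝ) < a} ≤
      ENNReal.ofReal (Real.exp (-t * a + (Real.exp t - 1) * ∑ j ∈ Ioc m k, 1 / (j : ℝ))) := by
  classical
  set Sr : Ω → ℝ := fun ω => ∑ j ∈ Ioc m k, ((W j ω : ℕ) : ℝ) with hSr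
  have hSrm : Measurable Sr :=
    Finset.measurable_sum _ fun j _ => measurable_from_nat.comp (hWm j)
  have hSrnn : ∀ ω, 0 ≤ Sr ω := fun ω => Finset.sum_nonneg fun j _ => Nat.cast_nonneg _
  have hint : Integrable (fun ω => Real.exp (t * Sr ω)) μ := by
    refine Integrable.mono' (integrable_const 1) ((hSrm.const_mul t).exp).aestronglyMeasurable
      (ae_of_all _ fun ω => ?_)
    rw [Real.norm_of_nonneg (Real.exp_pos _).le]
    exact Real.exp_le_one_iff.2 (mul_nonpos_of_nonpos_of_nonneg ht (hSrnn ω))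
  have hall : ∀ j ∈ Ioc m k, 1 ≤ j := fun j hj => le_trans hm (mem_Ioc.mp hj).1.le
  set F : {j : ℕ // 1 ≤ j} → Ω → ℝ := fun j => fun ω => ((W j.1 ω : ℕ) : ℝ) with hF
  set s' : Finset {j : ℕ // 1 ≤ j} := (Ioc m k).subtype (fun j => 1 ≤ j) with hs'
  have h1 : (∑ j' ∈ s', F j') = Sr := by
    funext ω
    rw [Finset.sum_apply]
    exact Finset.sum_subtype_of_mem (fun j => ((W j ω : ℕ) : ℝ)) hall
  have h2 := hind.mgf_sum (t := t) (fun j => measurable_from_nat.comp (hWm j.1)) s'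
  rw [h1] at h2
  have h3 : ∀ j' ∈ s', mgf (F j') μ t = Real.exp (1 / (j'.1 : ℝ) * (Real.exp t - 1)) :=
    fun j' _ => mgf_poisson μ (W j'.1) (hWm _) _ (by positivity) (hp j'.1 j'.2) t ht
  have hmgf : mgf Sr μ t = Real.exp ((Real.exp t - 1) * ∑ j ∈ Ioc m k, 1 / (j : ℝ)) := by
    have h4 := Finset.sum_subtype_of_mem (s := Ioc m k) (p := fun j => 1 ≤ j) (fun j => 1 / (j : ℝ) * (Real.exp t - 1)) hall
    rw [h2, Finset.prod_congr rfl h3, ← Real.exp_sum, h4, ← Finset.sum_mul, mul_comm]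
  have hch := measure_le_le_exp_mul_mgf (μ := μ) (X := Sr) a ht hint
  calc μ {ω | Sr ω < a} ≤ μ {ω | Sr ω ≤ a} := measure_mono fun ω (hω : Sr ω < a) => le_of_lt hω
    _ = ENNReal.ofReal ((μ {ω | Sr ω ≤ a}).toReal) :=
        (ENNReal.ofReal_toReal (measure_ne_top μ _)).symm
    _ ≤ ENNReal.ofReal (Real.exp (-t * a) * mgf Sr μ t) := ENNReal.ofReal_le_ofReal hch
    _ = ENNReal.ofReal (Real.exp (-t * a + (Real.exp t - 1) * ∑ j ∈ Ioc m k, 1 / (j : ℝ))) := by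
        rw [hmgf, ← Real.exp_add]

set_option maxHeartbeats 1000000 in
/-- For fixed `0 < ε < 1/2` there is `C = C(ε)` such that for all `k ≥ 1`, with
probability at least `1 − ε` one has `∑_{m<j≤k} X_j ≥ 0.99 log(k/m) − C` for all
`1 ≤ m ≤ k`, simultaneously for `X`, `Y` and `Z`. -/
theorem three_sequences_lower_bound {Ω : Type*} [MeasurableSpace Ω]
    (μ : Measure Ω) [IsProbabilityMeasure μ] (X Y Z : ℕ → Ω → ℕ)
    (hmeas : ∀ j, Measurable (X j) ∧ Measurable (Y j) ∧ Measurable (Z j))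
    (hindep : iIndepFun
      (fun p : Fin 3 × {j : ℕ // 1 ≤ j} => ![X, Y, Z] p.1 p.2.1) μ)
    (hpois : ∀ j : ℕ, 1 ≤ j → ∀ m : ℕ,
      μ {ω | X j ω = m} = poissonProb (1 / (j : ℝ)) m ∧
      μ {ω | Y j ω = m} = poissonProb (1 / (j : ℝ)) m ∧
      μ {ω | Z j ω = m} = poissonProb (1 / (j : ℝ)) m)
    (ε : ℝ) (hε : 0 < ε) (hε' : ε < 1 / 2) :
    ∃ C : ℝ, 0 < C ∧ ∀ k : ℕ, 1 ≤ k →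
      ENNReal.ofReal (1 - ε) ≤
        μ {ω | ∀ m : ℕ, 1 ≤ m → m ≤ k →
          0.99 * Real.log ((k : ℝ) / m) - C ≤ ((∑ j ∈ Finset.Ioc m k, X j ω : ℕ) : ℝ) ∧
          0.99 * Real.log ((k : ℝ) / m) - C ≤ ((∑ j ∈ Finset.Ioc m k, Y j ω : ℕ) : ℝ) ∧
          0.99 * Real.log ((k : ℝ) / m) - C ≤ ((∑ j ∈ Finset.Ioc m k, Z j ω : ℕ) : ℝ)} := by
  classical
  have h99 : (0:ℝ) < 0.99 := by norm_num
  set t : ℝ := Real.log 0.99 with htdef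
  have hrt : Real.exp t = 0.99 := Real.exp_log h99
  have ht0 : t < 0 := Real.log_neg h99 (by norm_num)
  have hs0 : (0:ℝ) < -t := by linarith
  have hkey : 0.99 * (-t) < 0.01 := by
    have h2 : (1:ℝ)/99 + 1 < Real.exp (1/99) := Real.add_one_lt_exp (by norm_num)
    have h3 : Real.log (100/99) < 1/99 := by
      rw [← Real.log_exp (1/99)]
      exact Real.log_lt_log (by norm_num) (by linarith)
    have h4 : -t = Real.log (100/99) := by
      rw [htdef, ← Real.log_inv]
      norm_num
    rw [h4]; linarith
  have hδ : (0:ℝ) < 0.01 - 0.99 * (-t) := by linarith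
  have hlog2 : 0 < Real.log 2 := Real.log_pos (by norm_num)
  have hlog2lt : Real.log 2 < 1 := by linarith [Real.log_two_lt_d9]
  set q : ℝ := Real.exp (-((0.01 - 0.99 * (-t)) * Real.log 2)) with hqdef
  have hq0 : (0:ℝ) ≤ q := (Real.exp_pos _).le
  have hq1 : q < 1 := by
    rw [hqdef]
    calc Real.exp (-((0.01 - 0.99 * (-t)) * Real.log 2)) < Real.exp 0 := by
          apply Real.exp_lt_exp.2; nlinarith
      _ = 1 := Real.exp_zero
  set K : ℝ := 3 * Real.exp (0.01 * Real.log 2) / (1 - q) with hKdef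
  have hKpos : 0 < K := by
    apply div_pos (by positivity) (by linarith)
  set C0 : ℝ := max (Real.log (K / ε) / (-t)) 0 + 1 with hC0def
  have hC0pos : 0 < C0 := by
    have := le_max_right (Real.log (K / ε) / (-t)) 0
    rw [hC0def]; linarith
  have hKC0 : K * Real.exp (-(-t) * C0) ≤ ε := by
    have h1 : Real.log (K / ε) ≤ (-t) * C0 := by
      have h2 : Real.log (K / ε) / (-t) ≤ C0 := by
        rw [hC0def]; have := le_max_left (Real.log (K / ε) / (-t)) 0; linarith
      have h5 := mul_le_mul_of_nonneg_right h2 hs0.le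
      rw [div_mul_cancel₀ _ (ne_of_gt hs0)] at h5
      linarith
    have h3 : Real.exp (-(-t) * C0) ≤ Real.exp (-(Real.log (K/ε))) := by
      apply Real.exp_le_exp.2; linarith
    have h4 : Real.exp (-(Real.log (K/ε))) = ε / K := by
      rw [Real.exp_neg, Real.exp_log (by positivity), inv_div]
    calc K * Real.exp (-(-t)*C0) ≤ K * (ε/K) := by
          rw [← h4] at *; exact mul_le_mul_of_nonneg_left h3 hKpos.le
      _ = ε := by field_simp
  refine ⟨C0 + 1, by linarith, ?_⟩
  intro k hk
  have hk0 : k ≠ 0 := Nat.one_le_iff_ne_zero.mp hk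
  have hkR : (0:ℝ) < k := by exact_mod_cast Nat.pos_of_ne_zero hk0
  set N : ℕ := Nat.log 2 k + 1 with hNdef
  set mm : ℕ → ℕ := fun i => k / 2 ^ i with hmmdef
  set aa : ℕ → ℝ := fun i => 0.99 * (Real.log k - Real.log (mm i)) - C0 with haadef
  have hpowle : ∀ i ∈ Finset.range N, 2 ^ i ≤ k := by
    intro i hi
    have hi' : i ≤ Nat.log 2 k := Nat.lt_succ_iff.mp (Finset.mem_range.mp hi)
    exact le_trans (Nat.pow_le_pow_right (by norm_num) hi') (Nat.pow_log_le_self 2 hk0)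
  have hmm1 : ∀ i ∈ Finset.range N, 1 ≤ mm i := by
    intro i hi
    rw [hmmdef]
    exact (Nat.one_le_div_iff (pow_pos (by norm_num) i)).2 (hpowle i hi)
  have hmmk : ∀ i, mm i ≤ k := fun i => Nat.div_le_self _ _
  -- measurability
  have hXm : ∀ j, Measurable (X j) := fun j => (hmeas j).1
  have hYm : ∀ j, Measurable (Y j) := fun j => (hmeas j).2.1
  have hZm : ∀ j, Measurable (Z j) := fun j => (hmeas j).2.2
  -- independence of each coordinate family
  have hindof : ∀ c : Fin 3, iIndepFun
      (fun j : {j : ℕ // 1 ≤ j} => fun ω => ((![X, Y, Z] c j.1 ω : ℕ) : ℝ)) μ := by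
    intro c
    have hinj : Function.Injective (fun j : {j : ℕ // 1 ≤ j} => (c, j)) := by
      intro a b h
      simpa using congrArg Prod.snd h
    have h0 := iIndepFun_reindex (fun j : {j : ℕ // 1 ≤ j} => (c, j)) hinj hindep
    exact h0.comp (fun _ (n : ℕ) => (n : ℝ)) (fun _ => measurable_from_nat)
  have hindX : iIndepFun
      (fun j : {j : ℕ // 1 ≤ j} => fun ω => ((X j.1 ω : ℕ) : ℝ)) μ := by
    have := hindof 0
    simpa using this
  have hindY : iIndepFun
      (fun j : {j : ℕ // 1 ≤ j} => fun ω => ((Y j.1 ω : ℕ) : ℝ)) μ := by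
    have := hindof 1
    simpa using this
  have hindZ : iIndepFun
      (fun j : {j : ℕ // 1 ≤ j} => fun ω => ((Z j.1 ω : ℕ) : ℝ)) μ := by
    have := hindof 2
    simpa using this
  -- bad events
  set BX : ℕ → Set Ω := fun i => {ω | ∑ j ∈ Ioc (mm i) k, ((X j ω : ℕ) : ℝ) < aa i} with hBX
  set BY : ℕ → Set Ω := fun i => {ω | ∑ j ∈ Ioc (mm i) k, ((Y j ω : ℕ) : ℝ) < aa i} with hBY
  set BZ : ℕ → Set Ω := fun i => {ω | ∑ j ∈ Ioc (mm i) k, ((Z j ω : ℕ) : ℝ) < aa i} with hBZ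
  set B : Set Ω := ⋃ i ∈ Finset.range N, (BX i ∪ BY i ∪ BZ i) with hB
  -- per-index exponent bound
  have hexpbd : ∀ i ∈ Finset.range N,
      Real.exp (-t * aa i + (Real.exp t - 1) * ∑ j ∈ Ioc (mm i) k, 1 / (j:ℝ))
        ≤ Real.exp (0.01 * Real.log 2) * Real.exp (-(-t) * C0) * q ^ i := by
    intro i hi
    have hmipos : (0:ℝ) < (mm i : ℝ) := by exact_mod_cast hmm1 i hi
    have hlam : Real.log k - Real.log (mm i) - Real.log 2
        ≤ ∑ j ∈ Ioc (mm i) k, 1/(j:ℝ) := by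
      have h1 := harmonic_lower (mm i) k (hmmk i)
      have ha : Real.log k ≤ Real.log ((k:ℝ)+1) := Real.log_le_log hkR (by linarith)
      have hmige : (1:ℝ) ≤ (mm i:ℝ) := by exact_mod_cast hmm1 i hi
      have hb : Real.log ((mm i:ℝ)+1) ≤ Real.log 2 + Real.log (mm i) := by
        rw [← Real.log_mul (by norm_num) (ne_of_gt hmipos)]
        exact Real.log_le_log (by linarith) (by linarith)
      linarith
    have hLlow : (i:ℝ) * Real.log 2 ≤ Real.log k - Real.log (mm i) := by
      have h7 : mm i * 2^i ≤ k := Nat.div_mul_le_self k (2^i)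
      have h7R : ((mm i:ℝ)) * 2^i ≤ (k:ℝ) := by exact_mod_cast h7
      have h8 := Real.log_le_log (by positivity) h7R
      rw [Real.log_mul (ne_of_gt hmipos) (by positivity), Real.log_pow] at h8
      linarith
    have hqpow : q ^ i = Real.exp ((i:ℝ) * (-((0.01 - 0.99 * (-t)) * Real.log 2))) := by
      rw [hqdef, ← Real.exp_nat_mul]
    rw [hqpow, ← Real.exp_add, ← Real.exp_add]
    apply Real.exp_le_exp.2
    rw [hrt, haadef]
    have hprod : (0.01 - 0.99 * (-t)) * ((i:ℝ) * Real.log 2)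
        ≤ (0.01 - 0.99 * (-t)) * (Real.log k - Real.log (mm i)) :=
      mul_le_mul_of_nonneg_left hLlow hδ.le
    ring_nf
    ring_nf at hlam hprod
    linarith [hlam, hprod]
  -- per-index measure bound
  have hperi : ∀ i ∈ Finset.range N, μ (BX i ∪ BY i ∪ BZ i) ≤
      ENNReal.ofReal (3 * (Real.exp (0.01 * Real.log 2) * Real.exp (-(-t) * C0) * q ^ i)) := by
    intro i hi
    have hb1 := chernoff_sum μ X hXm hindX (fun j hj n => (hpois j hj n).1)
      (mm i) k (hmm1 i hi) t (aa i) ht0.le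
    have hb2 := chernoff_sum μ Y hYm hindY (fun j hj n => (hpois j hj n).2.1)
      (mm i) k (hmm1 i hi) t (aa i) ht0.le
    have hb3 := chernoff_sum μ Z hZm hindZ (fun j hj n => (hpois j hj n).2.2)
      (mm i) k (hmm1 i hi) t (aa i) ht0.le
    have hbb : ENNReal.ofReal (Real.exp (-t * aa i +
        (Real.exp t - 1) * ∑ j ∈ Ioc (mm i) k, 1 / (j:ℝ)))
        ≤ ENNReal.ofReal (Real.exp (0.01 * Real.log 2) * Real.exp (-(-t) * C0) * q ^ i) :=
      ENNReal.ofReal_le_ofReal (hexpbd i hi)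
    calc μ (BX i ∪ BY i ∪ BZ i) ≤ μ (BX i ∪ BY i) + μ (BZ i) := measure_union_le _ _
      _ ≤ μ (BX i) + μ (BY i) + μ (BZ i) := by
          gcongr
          exact measure_union_le _ _
      _ ≤ ENNReal.ofReal (Real.exp (0.01 * Real.log 2) * Real.exp (-(-t) * C0) * q ^ i)
          + ENNReal.ofReal (Real.exp (0.01 * Real.log 2) * Real.exp (-(-t) * C0) * q ^ i)
          + ENNReal.ofReal (Real.exp (0.01 * Real.log 2) * Real.exp (-(-t) * C0) * q ^ i) := by
          gcongr
          exacts [le_trans hb1 hbb, le_trans hb2 hbb, le_trans hb3 hbb]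
      _ = ENNReal.ofReal (3 * (Real.exp (0.01 * Real.log 2) * Real.exp (-(-t) * C0) * q ^ i)) := by
          rw [← ENNReal.ofReal_add (by positivity) (by positivity),
            ← ENNReal.ofReal_add (by positivity) (by positivity)]
          ring_nf
  -- total bad measure
  have hBle : μ B ≤ ENNReal.ofReal ε := by
    calc μ B ≤ ∑ i ∈ Finset.range N, μ (BX i ∪ BY i ∪ BZ i) := measure_biUnion_finset_le _ _
      _ ≤ ∑ i ∈ Finset.range N, ENNReal.ofReal
            (3 * (Real.exp (0.01 * Real.log 2) * Real.exp (-(-t) * C0) * q ^ i)) :=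
          Finset.sum_le_sum hperi
      _ = ENNReal.ofReal (∑ i ∈ Finset.range N,
            3 * (Real.exp (0.01 * Real.log 2) * Real.exp (-(-t) * C0) * q ^ i)) := by
          rw [ENNReal.ofReal_sum_of_nonneg]
          intro i _
          positivity
      _ ≤ ENNReal.ofReal ε := by
          apply ENNReal.ofReal_le_ofReal
          have hgeo : ∑ i ∈ Finset.range N, q ^ i ≤ (1 - q)⁻¹ := by
            have h1 := Summable.sum_le_tsum (Finset.range N) (fun i _ => pow_nonneg hq0 i)
              (summable_geometric_of_lt_one hq0 hq1)
            rwa [tsum_geometric_of_lt_one hq0 hq1] at h1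
          have h2 : ∑ i ∈ Finset.range N,
              3 * (Real.exp (0.01 * Real.log 2) * Real.exp (-(-t) * C0) * q ^ i)
              = 3 * Real.exp (0.01 * Real.log 2) * Real.exp (-(-t) * C0)
                * ∑ i ∈ Finset.range N, q ^ i := by
            rw [Finset.mul_sum]
            apply Finset.sum_congr rfl
            intro i _
            ring
          rw [h2]
          have h3 : 3 * Real.exp (0.01 * Real.log 2) * Real.exp (-(-t) * C0)
              * ∑ i ∈ Finset.range N, q ^ i
              ≤ 3 * Real.exp (0.01 * Real.log 2) * Real.exp (-(-t) * C0) * (1 - q)⁻¹ := by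
            apply mul_le_mul_of_nonneg_left hgeo (by positivity)
          have h4 : 3 * Real.exp (0.01 * Real.log 2) * Real.exp (-(-t) * C0) * (1 - q)⁻¹
              = K * Real.exp (-(-t) * C0) := by
            rw [hKdef]; field_simp
          linarith [hKC0]
  -- complement inclusion
  have hcompl : Bᶜ ⊆ {ω | ∀ m : ℕ, 1 ≤ m → m ≤ k →
          0.99 * Real.log ((k : ℝ) / m) - (C0 + 1) ≤ ((∑ j ∈ Finset.Ioc m k, X j ω : ℕ) : ℝ) ∧
          0.99 * Real.log ((k : ℝ) / m) - (C0 + 1) ≤ ((∑ j ∈ Finset.Ioc m k, Y j ω : ℕ) : ℝ) ∧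
          0.99 * Real.log ((k : ℝ) / m) - (C0 + 1) ≤ ((∑ j ∈ Finset.Ioc m k, Z j ω : ℕ) : ℝ)} := by
    intro ω hω
    intro m hm1 hmk
    have hm0 : 0 < m := hm1
    have hmR : (0:ℝ) < m := by exact_mod_cast hm0
    set i : ℕ := Nat.log 2 (k / m) with hidef
    have hkm1 : 1 ≤ k / m := (Nat.one_le_div_iff hm0).2 hmk
    have hiN : i < N := by
      rw [hNdef]
      exact Nat.lt_succ_of_le (Nat.log_mono_right (Nat.div_le_self k m))
    have h8 : 2 ^ i ≤ k / m := Nat.pow_log_le_self 2 (Nat.one_le_iff_ne_zero.mp hkm1)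
    have h9 : 2 ^ i * m ≤ k := (Nat.le_div_iff_mul_le hm0).1 h8
    have hmlemi : m ≤ mm i := by
      rw [hmmdef]
      exact (Nat.le_div_iff_mul_le (pow_pos (by norm_num) i)).2 (by linarith [h9])
    have hmm1i : 1 ≤ mm i := le_trans hm1 hmlemi
    have hmiposR : (0:ℝ) < (mm i : ℝ) := by exact_mod_cast hmm1i
    have h5 : k / m < 2 ^ (i + 1) := Nat.lt_pow_succ_log_self (by norm_num) (k / m)
    have h6 : k < 2 ^ (i + 1) * m := (Nat.div_lt_iff_lt_mul hm0).1 h5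
    have h7 : mm i * 2 ^ i ≤ k := Nat.div_mul_le_self k (2 ^ i)
    have hmilt : mm i < 2 * m := by
      have hh : mm i * 2 ^ i < (2 * m) * 2 ^ i := by
        calc mm i * 2 ^ i ≤ k := h7
          _ < 2 ^ (i + 1) * m := h6
          _ = (2 * m) * 2 ^ i := by ring
      exact Nat.lt_of_mul_lt_mul_right hh
    have hmi2m : (mm i : ℝ) ≤ 2 * m := by
      have : (mm i : ℝ) < 2 * m := by exact_mod_cast hmilt
      linarith
    -- threshold comparison
    have hthresh : 0.99 * Real.log ((k : ℝ) / m) - (C0 + 1) ≤ aa i := by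
      have hlogmi : Real.log (mm i) ≤ Real.log 2 + Real.log m := by
        rw [← Real.log_mul (by norm_num) (ne_of_gt hmR)]
        exact Real.log_le_log hmiposR hmi2m
      have hlogdiv : Real.log ((k:ℝ)/m) = Real.log k - Real.log m :=
        Real.log_div (ne_of_gt hkR) (ne_of_gt hmR)
      rw [haadef, hlogdiv]
      nlinarith [hlog2lt, hlog2]
    have hnot : ω ∉ (BX i ∪ BY i ∪ BZ i) := by
      intro hmem
      exact hω (Set.mem_biUnion (Finset.mem_range.2 hiN) hmem)
    simp only [hBX, hBY, hBZ, Set.mem_union, Set.mem_setOf_eq, not_or] at hnot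
    obtain ⟨⟨hgX, hgY⟩, hgZ⟩ := hnot
    have key3 : ∀ (W : ℕ → Ω → ℕ),
        ¬ (∑ j ∈ Ioc (mm i) k, ((W j ω : ℕ) : ℝ) < aa i) →
        0.99 * Real.log ((k : ℝ) / m) - (C0 + 1) ≤ ((∑ j ∈ Finset.Ioc m k, W j ω : ℕ) : ℝ) := by
      intro W hW
      rw [not_lt] at hW
      have hsub : Ioc (mm i) k ⊆ Ioc m k := Finset.Ioc_subset_Ioc_left hmlemi
      have hmono : (∑ j ∈ Ioc (mm i) k, W j ω) ≤ ∑ j ∈ Ioc m k, W j ω :=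
        Finset.sum_le_sum_of_subset hsub
      have hmonoR : ((∑ j ∈ Ioc (mm i) k, W j ω : ℕ) : ℝ) ≤ ((∑ j ∈ Ioc m k, W j ω : ℕ) : ℝ) := by
        exact_mod_cast hmono
      have hcast : ((∑ j ∈ Ioc (mm i) k, W j ω : ℕ) : ℝ)
          = ∑ j ∈ Ioc (mm i) k, ((W j ω : ℕ) : ℝ) := by push_cast; rfl
      calc 0.99 * Real.log ((k : ℝ) / m) - (C0 + 1) ≤ aa i := hthresh
        _ ≤ ((∑ j ∈ Ioc (mm i) k, W j ω : ℕ) : ℝ) := by rw [hcast]; exact hW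
        _ ≤ _ := hmonoR
    exact ⟨key3 X hgX, key3 Y hgY, key3 Z hgZ⟩
  -- conclusion
  calc ENNReal.ofReal (1 - ε) ≤ 1 - ENNReal.ofReal ε := by
        have hsum : ENNReal.ofReal (1 - ε) + ENNReal.ofReal ε = 1 := by
          rw [← ENNReal.ofReal_add (by linarith) hε.le]
          norm_num
        exact (ENNReal.cancel_of_ne ENNReal.ofReal_ne_top).le_tsub_of_add_le_right hsum.le
    _ ≤ 1 - μ B := tsub_le_tsub_left hBle 1
    _ ≤ μ Bᶜ := by
        have huniv : (1 : ENNReal) ≤ μ B + μ Bᶜ := by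
          rw [← measure_univ (μ := μ), ← Set.union_compl_self B]
          exact measure_union_le _ _
        exact tsub_le_iff_left.2 huniv
    _ ≤ _ := measure_mono hcompl
end

section
/- There is a constant C > 0 such that for every integer m ≥ 1 and every real number θ whose distance ‖θ‖ to the nearest integer is positive, one has |∑_{j=1}^{m} cos(2πjθ)/j − log min(1/‖θ‖, m)| ≤ C. -/
open Finset

/-- `‖x‖`: the distance from `x` to the nearest integer. -/
noncomputable def distInt (x : ℝ) : ℝ := |x - round x|

private lemma sin_shift (x v : ℝ) :
    Real.sin (x + 2*v) - Real.sin x = 2 * Real.cos (x + v) * Real.sin v := by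
  have h : x + 2*v = (x + v) + v := by ring
  have h2 : Real.sin x = Real.sin ((x + v) - v) := by ring_nf
  rw [h, h2, Real.sin_add, Real.sin_sub]; ring

private lemma two_mul_le_sin (δ : ℝ) (h1 : 0 < δ) (h2 : δ ≤ 1/2) :
    2 * δ ≤ Real.sin (Real.pi * δ) := by
  have hπ := Real.pi_pos
  have h := Real.mul_le_sin (x := Real.pi * δ) (by positivity) (by nlinarith)
  have : 2 / Real.pi * (Real.pi * δ) = 2 * δ := by field_simp
  linarith [this ▸ h]

/-- Bound on `∑_{i<n} cos(2π(i+1)δ)`. -/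
private lemma cos_sum_shift_bound (δ : ℝ) (h1 : 0 < δ) (h2 : δ ≤ 1/2) (n : ℕ) :
    |∑ i ∈ Finset.range n, Real.cos (2*Real.pi*((i:ℝ)+1)*δ)| ≤ 1/(2*δ) := by
  have hs := two_mul_le_sin δ h1 h2
  have hspos : 0 < Real.sin (Real.pi * δ) := by linarith
  set f : ℕ → ℝ := fun i => Real.sin (2*Real.pi*δ*i + Real.pi*δ) with hf
  have tele := Finset.sum_range_sub f n
  have step : ∀ i : ℕ, f (i+1) - f i
      = Real.cos (2*Real.pi*((i:ℝ)+1)*δ) * (2*Real.sin (Real.pi*δ)) := by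
    intro i
    have h := sin_shift (2*Real.pi*δ*i + Real.pi*δ) (Real.pi*δ)
    have e1 : 2*Real.pi*δ*(i:ℝ) + Real.pi*δ + 2*(Real.pi*δ) = 2*Real.pi*δ*((i:ℕ)+1:ℕ) + Real.pi*δ := by
      push_cast; ring
    have e2 : 2*Real.pi*δ*(i:ℝ) + Real.pi*δ + Real.pi*δ = 2*Real.pi*((i:ℝ)+1)*δ := by ring
    rw [e1, e2] at h
    simp only [hf]
    push_cast at h ⊢
    linarith [h]
  have key : (∑ i ∈ Finset.range n, Real.cos (2*Real.pi*((i:ℝ)+1)*δ)) * (2 * Real.sin (Real.pi*δ))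
      = f n - f 0 := by
    rw [← tele, Finset.sum_mul]
    exact Finset.sum_congr rfl fun i _ => (step i).symm
  have hb : |f n - f 0| ≤ 2 := by
    have := Real.neg_one_le_sin (2*Real.pi*δ*n + Real.pi*δ)
    have := Real.sin_le_one (2*Real.pi*δ*n + Real.pi*δ)
    have := Real.neg_one_le_sin (2*Real.pi*δ*0 + Real.pi*δ)
    have := Real.sin_le_one (2*Real.pi*δ*0 + Real.pi*δ)
    simp only [hf]
    rw [abs_le]
    push_cast
    constructor <;> nlinarith
  have habs : |∑ i ∈ Finset.range n, Real.cos (2*Real.pi*((i:ℝ)+1)*δ)| * (2 * Real.sin (Real.pi*δ)) ≤ 2 := by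
    rw [← abs_of_pos (show (0:ℝ) < 2 * Real.sin (Real.pi*δ) by linarith), ← abs_mul, key]
    exact hb
  have h4 : (0:ℝ) < 4 * δ := by linarith
  calc |∑ i ∈ Finset.range n, Real.cos (2*Real.pi*((i:ℝ)+1)*δ)|
      ≤ 2 / (2 * Real.sin (Real.pi*δ)) := by
        rw [le_div_iff₀ (by linarith)]; exact habs
    _ ≤ 1/(2*δ) := by
        rw [div_le_div_iff₀ (by linarith) (by linarith)]
        nlinarith

/-- Bound on full partial sums `G n = ∑_{i<n} cos(2π i δ)`. -/
private lemma cos_G_bound (δ : ℝ) (h1 : 0 < δ) (h2 : δ ≤ 1/2) (n : ℕ) :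
    |∑ i ∈ Finset.range n, Real.cos (2*Real.pi*(i:ℝ)*δ)| ≤ 1/δ := by
  cases n with
  | zero => simp; positivity
  | succ k =>
    rw [Finset.sum_range_succ']
    have h0 : Real.cos (2*Real.pi*((0:ℕ):ℝ)*δ) = 1 := by norm_num
    rw [h0]
    have := cos_sum_shift_bound δ h1 h2 k
    have e : ∀ i : ℕ, Real.cos (2*Real.pi*(((i+1:ℕ)):ℝ)*δ) = Real.cos (2*Real.pi*((i:ℝ)+1)*δ) := by
      intro i; push_cast; ring_nf
    rw [Finset.sum_congr rfl (fun i _ => e i)]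
    have h12 : (1:ℝ) ≤ 1/(2*δ) := by rw [le_div_iff₀ (by linarith)]; linarith
    calc |(∑ i ∈ Finset.range k, Real.cos (2*Real.pi*((i:ℝ)+1)*δ)) + 1|
        ≤ |∑ i ∈ Finset.range k, Real.cos (2*Real.pi*((i:ℝ)+1)*δ)| + 1 := by simpa using abs_add_le (∑ i ∈ Finset.range k, Real.cos (2*Real.pi*((i:ℝ)+1)*δ)) 1
      _ ≤ 1/(2*δ) + 1/(2*δ) := by linarith
      _ = 1/δ := by rw [← add_div]; rw [div_eq_div_iff (by linarith) (by linarith)]; ring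

private lemma harmonicSumIcc (N : ℕ) :
    ((harmonic N : ℚ) : ℝ) = ∑ j ∈ Finset.Icc 1 N, (1:ℝ)/j := by
  induction N with
  | zero => simp
  | succ k ih =>
    rw [harmonic_succ, Finset.sum_Icc_succ_top (by omega)]
    push_cast
    rw [ih]
    push_cast
    ring

private lemma abs_cos_sub_one (x : ℝ) : |Real.cos x - 1| ≤ x^2 / 2 := by
  have h1 := Real.cos_le_one x
  have h2 := Real.one_sub_sq_div_two_le_cos (x := x)
  rw [abs_sub_comm, abs_of_nonneg (by linarith)]
  linarith

private lemma head_bound (δ : ℝ) (h1 : 0 < δ) (N : ℕ) (hN : 1 ≤ N) (hNδ : (N:ℝ) * δ ≤ 1) :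
    |(∑ j ∈ Finset.Icc 1 N, Real.cos (2*Real.pi*(j:ℝ)*δ) / j) - Real.log N|
      ≤ 2*Real.pi^2 + 1 := by
  have hπ := Real.pi_pos
  have hsplit : ∀ j ∈ Finset.Icc 1 N,
      Real.cos (2*Real.pi*(j:ℝ)*δ) / j
        = (Real.cos (2*Real.pi*(j:ℝ)*δ) - 1) / j + 1/j := by
    intro j hj
    rw [← add_div, sub_add_cancel]
  rw [Finset.sum_congr rfl hsplit, Finset.sum_add_distrib]
  have hA : |∑ j ∈ Finset.Icc 1 N, (Real.cos (2*Real.pi*(j:ℝ)*δ) - 1) / j| ≤ 2*Real.pi^2 := by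
    calc |∑ j ∈ Finset.Icc 1 N, (Real.cos (2*Real.pi*(j:ℝ)*δ) - 1) / j|
        ≤ ∑ j ∈ Finset.Icc 1 N, |(Real.cos (2*Real.pi*(j:ℝ)*δ) - 1) / j| :=
          Finset.abs_sum_le_sum_abs _ _
      _ ≤ ∑ j ∈ Finset.Icc 1 N, 2*Real.pi^2*N*δ^2 := by
          apply Finset.sum_le_sum
          intro j hj
          obtain ⟨hj1, hj2⟩ := Finset.mem_Icc.mp hj
          have hjpos : (0:ℝ) < j := by exact_mod_cast hj1
          have hjN : (j:ℝ) ≤ N := by exact_mod_cast hj2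
          rw [abs_div, abs_of_pos hjpos]
          rw [div_le_iff₀ hjpos]
          have := abs_cos_sub_one (2*Real.pi*(j:ℝ)*δ)
          calc |Real.cos (2*Real.pi*(j:ℝ)*δ) - 1| ≤ (2*Real.pi*(j:ℝ)*δ)^2/2 := this
            _ = 2*Real.pi^2*(j:ℝ)*δ^2 * (j:ℝ) := by ring
            _ ≤ 2*Real.pi^2*(N:ℝ)*δ^2 * (j:ℝ) := by nlinarith
      _ = (N:ℝ) * (2*Real.pi^2*N*δ^2) := by
          rw [Finset.sum_const, Nat.card_Icc]
          simp [nsmul_eq_mul]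
      _ ≤ 2*Real.pi^2 := by
          have h0 : (0:ℝ) ≤ (N:ℝ)*δ := by positivity
          have ht : ((N:ℝ)*δ)^2 ≤ 1 := by nlinarith
          nlinarith [mul_nonneg (sq_nonneg Real.pi) (by linarith : (0:ℝ) ≤ 1 - ((N:ℝ)*δ)^2)]
  have hNpos : (0:ℝ) < N := by exact_mod_cast hN
  have hB : |(∑ j ∈ Finset.Icc 1 N, (1:ℝ)/j) - Real.log N| ≤ 1 := by
    rw [← harmonicSumIcc]
    have hup := harmonic_le_one_add_log N
    have hlo := log_add_one_le_harmonic N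
    have hmono : Real.log N ≤ Real.log (N+1) := by
      apply Real.log_le_log hNpos; linarith
    have : Real.log ((N:ℝ)+1) ≤ ((harmonic N : ℚ) : ℝ) := by
      have := hlo; push_cast at this ⊢; linarith
    rw [abs_le]
    constructor <;> linarith
  rw [add_sub_assoc]
  calc |(∑ j ∈ Finset.Icc 1 N, (Real.cos (2*Real.pi*(j:ℝ)*δ) - 1) / j)
        + ((∑ j ∈ Finset.Icc 1 N, (1:ℝ)/j) - Real.log N)|
      ≤ |∑ j ∈ Finset.Icc 1 N, (Real.cos (2*Real.pi*(j:ℝ)*δ) - 1) / j|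
        + |(∑ j ∈ Finset.Icc 1 N, (1:ℝ)/j) - Real.log N| := abs_add_le _ _
    _ ≤ 2*Real.pi^2 + 1 := by linarith


private lemma tail_bound (δ : ℝ) (h1 : 0 < δ) (h2 : δ ≤ 1/2) (M m : ℕ) (hMm : M < m)
    (hM : 1/δ < (M:ℝ) + 1) :
    |∑ j ∈ Finset.Ioc M m, Real.cos (2*Real.pi*(j:ℝ)*δ) / j| ≤ 3 := by
  set g : ℕ → ℝ := fun i => Real.cos (2*Real.pi*(i:ℝ)*δ) with hg
  set f : ℕ → ℝ := fun i => ((i:ℝ))⁻¹ with hf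
  have habel := Finset.sum_Ioc_by_parts f g hMm
  have hsum : ∑ j ∈ Finset.Ioc M m, Real.cos (2*Real.pi*(j:ℝ)*δ) / j
      = ∑ j ∈ Finset.Ioc M m, f j • g j := by
    apply Finset.sum_congr rfl
    intro j _
    simp only [hf, hg, smul_eq_mul]
    rw [div_eq_mul_inv, mul_comm]
  rw [hsum, habel]
  have hG : ∀ n : ℕ, |∑ i ∈ Finset.range n, g i| ≤ 1/δ := fun n => cos_G_bound δ h1 h2 n
  have hMpos : (0:ℝ) < (M:ℝ) + 1 := by positivity
  have hrecip : 1 < δ * ((M:ℝ)+1) := by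
    rw [div_lt_iff₀ h1] at hM; linarith
  have hu : ((M:ℝ)+1)⁻¹ ≤ δ := by
    rw [inv_le_comm₀ hMpos h1, ← one_div]
    linarith
  have hfm : |f m| ≤ ((M:ℝ)+1)⁻¹ := by
    have hm1 : ((M:ℝ))+1 ≤ (m:ℝ) := by exact_mod_cast hMm
    simp only [hf]
    rw [abs_of_nonneg (by positivity)]
    exact inv_anti₀ hMpos hm1
  have hfM : |f (M+1)| = ((M:ℝ)+1)⁻¹ := by
    simp only [hf]; push_cast; rw [abs_of_nonneg (by positivity)]
  have tele : ∀ b, M ≤ b → ∑ i ∈ Finset.Ioc M b, (f i - f (i+1)) = f (M+1) - f (b+1) := by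
    intro b hb
    induction b, hb using Nat.le_induction with
    | base => simp
    | succ k hk ih => rw [Finset.sum_Ioc_succ_top hk, ih]; ring
  have hS : |∑ i ∈ Finset.Ioc M (m-1), (f (i+1) - f i) • (∑ j ∈ Finset.range (i+1), g j)|
      ≤ (1/δ) * ((M:ℝ)+1)⁻¹ := by
    calc |∑ i ∈ Finset.Ioc M (m-1), (f (i+1) - f i) • (∑ j ∈ Finset.range (i+1), g j)|
        ≤ ∑ i ∈ Finset.Ioc M (m-1), |(f (i+1) - f i) • (∑ j ∈ Finset.range (i+1), g j)| :=
          Finset.abs_sum_le_sum_abs _ _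
      _ ≤ ∑ i ∈ Finset.Ioc M (m-1), (f i - f (i+1)) * (1/δ) := by
          apply Finset.sum_le_sum
          intro i hi
          obtain ⟨hi1, _⟩ := Finset.mem_Ioc.mp hi
          have hipos : (0:ℝ) < (i:ℝ) := by exact_mod_cast (by omega : 0 < i)
          have hmono : f (i+1) ≤ f i := by
            simp only [hf]
            apply inv_anti₀ hipos
            push_cast; linarith
          rw [smul_eq_mul, abs_mul, abs_sub_comm, abs_of_nonneg (by linarith : (0:ℝ) ≤ f i - f (i+1))]
          exact mul_le_mul_of_nonneg_left (hG (i+1)) (by linarith)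
      _ = (∑ i ∈ Finset.Ioc M (m-1), (f i - f (i+1))) * (1/δ) := by rw [Finset.sum_mul]
      _ ≤ (1/δ) * ((M:ℝ)+1)⁻¹ := by
          have hMb : M ≤ m - 1 := by omega
          rw [tele (m-1) hMb]
          have hfnn : (0:ℝ) ≤ f (m-1+1) := by simp only [hf]; positivity
          have hfM1 : f (M+1) = ((M:ℝ)+1)⁻¹ := by simp only [hf]; push_cast; ring_nf
          rw [mul_comm]
          apply mul_le_mul_of_nonneg_left _ (by positivity : (0:ℝ) ≤ 1/δ)
          rw [← hfM1]; linarith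
  have h3 : ∀ x y z : ℝ, |x - y - z| ≤ |x| + |y| + |z| := by
    intro x y z
    calc |x - y - z| ≤ |x - y| + |z| := by
          simpa [sub_eq_add_neg] using abs_add_le (x - y) (-z)
      _ ≤ |x| + |y| + |z| := by
          have : |x - y| ≤ |x| + |y| := by simpa [sub_eq_add_neg] using abs_add_le x (-y)
          linarith
  have hbound := h3 (f m • ∑ i ∈ Finset.range (m+1), g i)
    (f (M+1) • ∑ i ∈ Finset.range (M+1), g i)
    (∑ i ∈ Finset.Ioc M (m-1), (f (i+1) - f i) • ∑ j ∈ Finset.range (i+1), g j)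
  have e1 : |f m • ∑ i ∈ Finset.range (m+1), g i| ≤ ((M:ℝ)+1)⁻¹ * (1/δ) := by
    rw [smul_eq_mul, abs_mul]
    exact mul_le_mul hfm (hG (m+1)) (abs_nonneg _) (by positivity)
  have e2 : |f (M+1) • ∑ i ∈ Finset.range (M+1), g i| ≤ ((M:ℝ)+1)⁻¹ * (1/δ) := by
    rw [smul_eq_mul, abs_mul, hfM]
    exact mul_le_mul_of_nonneg_left (hG (M+1)) (by positivity)
  have hfinal : ((M:ℝ)+1)⁻¹ * (1/δ) ≤ 1 := by
    rw [mul_one_div, div_le_one h1]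
    exact hu
  calc |f m • (∑ i ∈ Finset.range (m+1), g i) - f (M+1) • (∑ i ∈ Finset.range (M+1), g i)
        - ∑ i ∈ Finset.Ioc M (m-1), (f (i+1) - f i) • ∑ j ∈ Finset.range (i+1), g j|
      ≤ _ := hbound
    _ ≤ ((M:ℝ)+1)⁻¹ * (1/δ) + ((M:ℝ)+1)⁻¹ * (1/δ) + (1/δ) * ((M:ℝ)+1)⁻¹ := by
        linarith [hS]
    _ ≤ 3 := by rw [mul_comm (1/δ)]; linarith

/-- `∑_{j≤m} cos(2πjθ)/j = log min(1/‖θ‖, m) + O(1)` for `‖θ‖ > 0`. -/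
theorem cosine_sum_estimate :
    ∃ C : ℝ, 0 < C ∧ ∀ m : ℕ, 1 ≤ m → ∀ θ : ℝ, 0 < distInt θ →
      |(∑ j ∈ Finset.Icc 1 m, Real.cos (2 * Real.pi * j * θ) / j) -
        Real.log (min (1 / distInt θ) (m : ℝ))| ≤ C := by
  refine ⟨30, by norm_num, ?_⟩
  intro m hm θ hθ
  have hπ := Real.pi_pos
  set δ := distInt θ with hδdef
  have hδpos : 0 < δ := hθ
  have hδhalf : δ ≤ 1/2 := abs_sub_round θ
  have hcos : ∀ j : ℕ, Real.cos (2*Real.pi*(j:ℝ)*θ) = Real.cos (2*Real.pi*(j:ℝ)*δ) := by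
    intro j
    have h1 : 2*Real.pi*(j:ℝ)*θ
        = 2*Real.pi*(j:ℝ)*(θ - round θ) + ((j * round θ : ℤ) : ℝ) * (2*Real.pi) := by
      push_cast; ring
    rw [h1, Real.cos_add_int_mul_two_pi]
    rw [hδdef]; unfold distInt
    rcases abs_cases (θ - round θ) with ⟨h, _⟩ | ⟨h, _⟩
    · rw [h]
    · rw [h, show 2*Real.pi*(j:ℝ)*(-(θ - ↑(round θ)))
          = -(2*Real.pi*(j:ℝ)*(θ - ↑(round θ))) by ring, Real.cos_neg]
  have hsumeq : ∀ s : Finset ℕ, ∑ j ∈ s, Real.cos (2*Real.pi*(j:ℝ)*θ)/j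
      = ∑ j ∈ s, Real.cos (2*Real.pi*(j:ℝ)*δ)/j :=
    fun s => Finset.sum_congr rfl (fun j _ => by rw [hcos j])
  rw [hsumeq]
  have hδinv : (0:ℝ) < 1/δ := by positivity
  rcases le_or_gt (m:ℝ) (1/δ) with hcase | hcase
  · rw [min_eq_right hcase]
    have h := head_bound δ hδpos m hm ((le_div_iff₀ hδpos).mp hcase)
    have h30 : 2*Real.pi^2 + 1 ≤ 30 := by nlinarith [Real.pi_lt_d2, Real.pi_pos]
    linarith
  · rw [min_eq_left hcase.le]
    set M := ⌊1/δ⌋₊ with hMdef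
    have hMle : (M:ℝ) ≤ 1/δ := Nat.floor_le (le_of_lt hδinv)
    have hMgt : 1/δ < (M:ℝ) + 1 := Nat.lt_floor_add_one _
    have hM1 : 1 ≤ M := by
      have h2 : (2:ℝ) ≤ 1/δ := by rw [le_div_iff₀ hδpos]; linarith
      exact Nat.le_floor (by push_cast; linarith)
    have hMm : M < m := by
      have : (M:ℝ) < (m:ℝ) := lt_of_le_of_lt hMle hcase
      exact_mod_cast this
    have hsplit : (∑ j ∈ Finset.Icc 1 M, Real.cos (2*Real.pi*(j:ℝ)*δ)/j)
        + (∑ j ∈ Finset.Ioc M m, Real.cos (2*Real.pi*(j:ℝ)*δ)/j)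
        = ∑ j ∈ Finset.Icc 1 m, Real.cos (2*Real.pi*(j:ℝ)*δ)/j := by
      rw [show Finset.Icc 1 m = Finset.Ioc 0 m from Finset.Icc_add_one_left_eq_Ioc 0 m,
          show Finset.Icc 1 M = Finset.Ioc 0 M from Finset.Icc_add_one_left_eq_Ioc 0 M]
      exact Finset.sum_Ioc_consecutive _ (Nat.zero_le M) hMm.le
    rw [← hsplit]
    have hhead := head_bound δ hδpos M hM1 ((le_div_iff₀ hδpos).mp hMle)
    have htail := tail_bound δ hδpos hδhalf M m hMm hMgt
    have hMpos : (0:ℝ) < M := by exact_mod_cast hM1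
    have hlog1 : Real.log M ≤ Real.log (1/δ) := Real.log_le_log hMpos hMle
    have hlog2 : Real.log (1/δ) ≤ Real.log M + 1 := by
      have hM1R : (1:ℝ) ≤ M := by exact_mod_cast hM1
      have h2M : 1/δ ≤ 2*(M:ℝ) := by linarith
      calc Real.log (1/δ) ≤ Real.log (2*M) := Real.log_le_log hδinv h2M
        _ = Real.log 2 + Real.log M := Real.log_mul (by norm_num) (ne_of_gt hMpos)
        _ ≤ Real.log M + 1 := by
            have := Real.log_le_sub_one_of_pos (by norm_num : (0:ℝ) < 2)
            linarith
    set A := ∑ j ∈ Finset.Icc 1 M, Real.cos (2*Real.pi*(j:ℝ)*δ)/j with hA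
    set B := ∑ j ∈ Finset.Ioc M m, Real.cos (2*Real.pi*(j:ℝ)*δ)/j with hB
    have key : (A + B) - Real.log (1/δ)
        = ((A - Real.log M) + B) + (Real.log M - Real.log (1/δ)) := by ring
    rw [key]
    have t1 := abs_add_le ((A - Real.log M) + B) (Real.log M - Real.log (1/δ))
    have t2 := abs_add_le (A - Real.log M) B
    have t3 : |Real.log M - Real.log (1/δ)| ≤ 1 := by
      rw [abs_le]; constructor <;> linarith
    have h30 : 2*Real.pi^2 + 5 ≤ 30 := by nlinarith [Real.pi_lt_d2, Real.pi_pos]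
    linarith
end
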